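/- With the notation of the context, the degree-0 component of η(ν′(Ω′_W)) equals (ν′(Ω′_W))₀ = (1/2)·B(ρ_k,ρ_k) − (1/8)·Σ_{α,β>0} k_α k_β·B(α,β)³/(B(α,α)B(β,β)), where ρ_k = (1/2)Σ_{α>0} k_α α ∈ V* and the sum is over all ordered pairs of positive roots. -/
import Mathlib


noncomputable section

open scoped Classical

/-- The defining relation of the Weyl algebra of a symplectic form `ω`. -/
def weylRel (R : Type*) [CommRing R] (U : Type*) [AddCommGroup U] [Module R U]
    (ω : U →ₗ[R] U →ₗ[R] R) : TensorAlgebra R U → TensorAlgebra R U → Prop :=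
  fun a b => ∃ u w : U,
    a = TensorAlgebra.ι R u * TensorAlgebra.ι R w ∧
    b = TensorAlgebra.ι R w * TensorAlgebra.ι R u + algebraMap R _ (ω u w)

/-- The Weyl algebra of `(U, ω)`. -/
abbrev WeylAlg (R : Type*) [CommRing R] (U : Type*) [AddCommGroup U] [Module R U]
    (ω : U →ₗ[R] U →ₗ[R] R) := RingQuot (weylRel R U ω)

/-- The canonical linear map `U → 𝒲(U,ω)`. -/
def weylι (R : Type*) [CommRing R] (U : Type*) [AddCommGroup U] [Module R U]
    (ω : U →ₗ[R] U →ₗ[R] R) : U →ₗ[R] WeylAlg R U ω :=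
  (RingQuot.mkAlgHom R (weylRel R U ω)).toLinearMap ∘ₗ TensorAlgebra.ι R

/-- The canonical symplectic form on `V ⊕ V*`: `ω(V,V) = ω(V*,V*) = 0`, `ω(α,v) = α(v)`. -/
def sympForm (R : Type*) [CommRing R] (V : Type*) [AddCommGroup V] [Module R V] :
    (V × Module.Dual R V) →ₗ[R] (V × Module.Dual R V) →ₗ[R] R :=
  LinearMap.mk₂ R (fun u w => u.2 w.1 - w.2 u.1)
    (by intro m₁ m₂ n; simp; ring)
    (by intro c m n; simp; ring)
    (by intro m n₁ n₂; simp; ring)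
    (by intro c m n; simp; ring)

/-- The image of a vector `v ∈ V` in the Weyl algebra `𝒲(V ⊕ V*, ω)`. -/
def wVec (R : Type*) [CommRing R] (V : Type*) [AddCommGroup V] [Module R V] (v : V) :
    WeylAlg R (V × Module.Dual R V) (sympForm R V) :=
  weylι R (V × Module.Dual R V) (sympForm R V) (v, 0)

/-- The image of a functional `φ ∈ V*` in the Weyl algebra `𝒲(V ⊕ V*, ω)`. -/
def wDual (R : Type*) [CommRing R] (V : Type*) [AddCommGroup V] [Module R V]
    (φ : Module.Dual R V) : WeylAlg R (V × Module.Dual R V) (sympForm R V) :=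
  weylι R (V × Module.Dual R V) (sympForm R V) (0, φ)

section RootSystem

variable (n : ℕ)

/-- Real `n`-space `V₀`, containing the root system. -/
abbrev RV := Fin n → ℝ

/-- Its complexification `V = ℂⁿ`. -/
abbrev CV := Fin n → ℂ

/-- The standard inner product on `ℝⁿ` (the `W`-invariant form `B`). -/
def dotR (x y : RV n) : ℝ := ∑ i, x i * y i

/-- The bilinear extension of `B` to `ℂⁿ`. -/
def dotC (x y : CV n) : ℂ := ∑ i, x i * y i

/-- The inclusion `ℝⁿ → ℂⁿ`. -/
def cVec (x : RV n) : CV n := fun i => (x i : ℂ)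

/-- The functional `B(x, ·) ∈ V*` attached to `x ∈ ℂⁿ`. -/
def cForm (x : CV n) : Module.Dual ℂ (CV n) := ∑ i, x i • LinearMap.proj i

/-- The real reflection `s_α(v) = v − (2 B(α,v)/B(α,α)) α` on `ℝⁿ`. -/
def reflR (α : RV n) : RV n → RV n := fun v => v - (2 * dotR n α v / dotR n α α) • α

/-- The complexified reflection `s_α` as a linear endomorphism of `ℂⁿ`. -/
def reflC (α : RV n) : CV n →ₗ[ℂ] CV n :=
  LinearMap.id - (2 / (dotR n α α : ℂ)) • (cForm n (cVec n α)).smulRight (cVec n α)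

lemma cForm_cVec_self (α : RV n) : cForm n (cVec n α) (cVec n α) = (dotR n α α : ℂ) := by
  simp [cForm, cVec, dotR]

lemma reflC_invol (α : RV n) (h : dotR n α α ≠ 0) : ∀ v, reflC n α (reflC n α v) = v := by
  intro v
  have hd : (dotR n α α : ℂ) ≠ 0 := by exact_mod_cast h
  simp only [reflC, LinearMap.sub_apply, LinearMap.id_apply, LinearMap.smul_apply,
    LinearMap.smulRight_apply, map_sub, map_smul, cForm_cVec_self, smul_eq_mul]
  match_scalars
  · ring
  · field_simp
    ring

/-- The complexified reflection `s_α` as a linear automorphism of `ℂⁿ` (for vectors `α`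
with `B(α,α) = 0` — never the case for roots — we use the identity instead). -/
def reflE (α : RV n) : CV n ≃ₗ[ℂ] CV n :=
  if h : dotR n α α = 0 then LinearEquiv.refl ℂ (CV n)
  else
    { toLinearMap := reflC n α
      invFun := reflC n α
      left_inv := reflC_invol n α h
      right_inv := reflC_invol n α h }

/-- The commutator `[s_α,s_β] = s_α s_β − s_β s_α`, an element of `so(V,B) ⊂ End(ℂⁿ)`. -/
def commC (α β : RV n) : Module.End ℂ (CV n) :=
  (reflE n α).toLinearMap ∘ₗ (reflE n β).toLinearMap
    - (reflE n β).toLinearMap ∘ₗ (reflE n α).toLinearMap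

/-- The Weyl algebra `𝒲(V ⊕ V*, ω)` for `V = ℂⁿ`. -/
abbrev WC := WeylAlg ℂ (CV n × Module.Dual ℂ (CV n)) (sympForm ℂ (CV n))

/-- The Lie algebra homomorphism `ν′ : so(V,B) → 𝒲(V⊕V*,ω)`, `ν′(f) = Σ_i f(v_i) v_i*`
(written here on all endomorphisms, using the standard basis and its dual basis). -/
def nuP (f : Module.End ℂ (CV n)) : WC n :=
  ∑ i, wVec ℂ (CV n) (f (Pi.single i 1)) * wDual ℂ (CV n) (LinearMap.proj i)

/-- `B(α∨, β∨) = 4 B(α,β)/(B(α,α) B(β,β))`, the pairing of the coroots. -/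
def Bvee (α β : RV n) : ℝ := 4 * dotR n α β / (dotR n α α * dotR n β β)

/-- `ν′(Ω′_W) = (1/16) Σ_{α,β>0, B(α,β)≠0} k_α k_β B(α∨,β∨)⁻¹ ν′([s_α,s_β])²`. -/
def nuOmegaPrime (Φp : Finset (RV n)) (kf : RV n → ℂ) : WC n :=
  (1 / 16 : ℂ) • ∑ α ∈ Φp, ∑ β ∈ Φp,
    if dotR n α β ≠ 0 then
      (kf α * kf β * ((Bvee n α β : ℝ) : ℂ)⁻¹) • (nuP n (commC n α β)) ^ 2
    else 0

-- AUX BATCH A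
lemma weylι_mul (R : Type*) [CommRing R] (U : Type*) [AddCommGroup U] [Module R U]
    (ω : U →ₗ[R] U →ₗ[R] R) (u w : U) :
    weylι R U ω u * weylι R U ω w
      = weylι R U ω w * weylι R U ω u + algebraMap R (WeylAlg R U ω) (ω u w) := by
  have hrel : weylRel R U ω
      (TensorAlgebra.ι R u * TensorAlgebra.ι R w)
      (TensorAlgebra.ι R w * TensorAlgebra.ι R u
        + algebraMap R (TensorAlgebra R U) (ω u w)) := ⟨u, w, rfl, rfl⟩
  have h := RingQuot.mkAlgHom_rel R hrel
  simpa [weylι, map_mul, map_add, AlgHom.commutes] using h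

/-- `wVec` as a linear map. -/
def wVecL : CV n →ₗ[ℂ] WC n :=
  (weylι ℂ (CV n × Module.Dual ℂ (CV n)) (sympForm ℂ (CV n))).comp
    (LinearMap.inl ℂ (CV n) (Module.Dual ℂ (CV n)))

/-- `wDual` as a linear map. -/
def wDualL : Module.Dual ℂ (CV n) →ₗ[ℂ] WC n :=
  (weylι ℂ (CV n × Module.Dual ℂ (CV n)) (sympForm ℂ (CV n))).comp
    (LinearMap.inr ℂ (CV n) (Module.Dual ℂ (CV n)))

lemma wVec_eq (v : CV n) : wVec ℂ (CV n) v = wVecL n v := rfl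
lemma wDual_eq (φ : Module.Dual ℂ (CV n)) : wDual ℂ (CV n) φ = wDualL n φ := rfl

lemma wdw (φ : Module.Dual ℂ (CV n)) (v : CV n) :
    wDualL n φ * wVecL n v = wVecL n v * wDualL n φ + (φ v) • (1 : WC n) := by
  have h := weylι_mul ℂ (CV n × Module.Dual ℂ (CV n)) (sympForm ℂ (CV n)) (0, φ) (v, 0)
  have hω : sympForm ℂ (CV n) (0, φ) (v, 0) = φ v := by simp [sympForm]
  simpa [wVecL, wDualL, hω, Algebra.algebraMap_eq_smul_one] using h

lemma wvv (v w : CV n) : wVecL n v * wVecL n w = wVecL n w * wVecL n v := by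
  have h := weylι_mul ℂ (CV n × Module.Dual ℂ (CV n)) (sympForm ℂ (CV n)) (v, 0) (w, 0)
  have hω : sympForm ℂ (CV n) (v, 0) (w, 0) = 0 := by simp [sympForm]
  simpa [wVecL, hω] using h

lemma wdd (φ ψ : Module.Dual ℂ (CV n)) : wDualL n φ * wDualL n ψ = wDualL n ψ * wDualL n φ := by
  have h := weylι_mul ℂ (CV n × Module.Dual ℂ (CV n)) (sympForm ℂ (CV n)) (0, φ) (0, ψ)
  have hω : sympForm ℂ (CV n) (0, φ) (0, ψ) = 0 := by simp [sympForm]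
  simpa [wDualL, hω] using h

/-- basis vector images -/
def Wb (i : Fin n) : WC n := wVec ℂ (CV n) (Pi.single i 1)
def Db (i : Fin n) : WC n := wDual ℂ (CV n) (LinearMap.proj i)
def dC (i j : Fin n) : ℂ := if i = j then 1 else 0

lemma dw1 (k i : Fin n) : Db n k * Wb n i = Wb n i * Db n k + dC n k i • (1 : WC n) := by
  have := wdw n (LinearMap.proj k) (Pi.single i 1)
  simpa [Wb, Db, wVec_eq, wDual_eq, dC, LinearMap.proj_apply, Pi.single_apply] using this

lemma dw2 (k i : Fin n) (x : WC n) :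
    Db n k * (Wb n i * x) = Wb n i * (Db n k * x) + dC n k i • x := by
  rw [← mul_assoc, dw1, add_mul, mul_assoc, smul_mul_assoc, one_mul]
-- AUX BATCH B
lemma perm_sum_succ {m : ℕ} {M : Type*} [AddCommMonoid M] (f : Equiv.Perm (Fin (m+1)) → M) :
    ∑ σ : Equiv.Perm (Fin (m+1)), f σ
      = ∑ a : Fin (m+1), ∑ τ : Equiv.Perm (Fin m), f (Equiv.Perm.decomposeFin.symm (a, τ)) := by
  rw [← Equiv.sum_comp (Equiv.Perm.decomposeFin (n := m)).symm f, Fintype.sum_prod_type]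

lemma perm_one_sum {M : Type*} [AddCommMonoid M] (f : Equiv.Perm (Fin 1) → M) :
    ∑ σ : Equiv.Perm (Fin 1), f σ = f 1 := by
  have h : ∀ σ : Equiv.Perm (Fin 1), σ = 1 := fun σ => Equiv.ext fun x => Subsingleton.elim _ _
  rw [Fintype.sum_eq_single 1 (fun σ hσ => absurd (h σ) hσ)]

lemma perm2_word {A : Type*} {B : Type*} [Semiring A] (c : Fin 2 → B) (L : B → A) :
    ∑ σ : Equiv.Perm (Fin 2), (List.ofFn fun i => L (c (σ i))).prod
      = L (c 0) * L (c 1) + L (c 1) * L (c 0) := by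
  simp only [perm_sum_succ, perm_one_sum, Fin.sum_univ_succ, Fin.sum_univ_zero,
    List.ofFn_succ, List.ofFn_zero, List.prod_cons, List.prod_nil, mul_one, add_zero, zero_add]
  norm_num [← add_assoc, ← mul_assoc]
  all_goals rfl

lemma perm4_word {A : Type*} {B : Type*} [Semiring A] (c : Fin 4 → B) (L' : B → A) :
    ∑ σ : Equiv.Perm (Fin 4), (List.ofFn fun i => L' (c (σ i))).prod
      = L' (c 0) * L' (c 1) * L' (c 2) * L' (c 3) + L' (c 0) * L' (c 1) * L' (c 3) * L' (c 2) + L' (c 0) * L' (c 2) * L' (c 1) * L' (c 3)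
      + L' (c 0) * L' (c 2) * L' (c 3) * L' (c 1) + L' (c 0) * L' (c 3) * L' (c 2) * L' (c 1) + L' (c 0) * L' (c 3) * L' (c 1) * L' (c 2)
      + L' (c 1) * L' (c 0) * L' (c 2) * L' (c 3) + L' (c 1) * L' (c 0) * L' (c 3) * L' (c 2) + L' (c 1) * L' (c 2) * L' (c 0) * L' (c 3)
      + L' (c 1) * L' (c 2) * L' (c 3) * L' (c 0) + L' (c 1) * L' (c 3) * L' (c 2) * L' (c 0) + L' (c 1) * L' (c 3) * L' (c 0) * L' (c 2)
      + L' (c 2) * L' (c 1) * L' (c 0) * L' (c 3) + L' (c 2) * L' (c 1) * L' (c 3) * L' (c 0) + L' (c 2) * L' (c 0) * L' (c 1) * L' (c 3)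
      + L' (c 2) * L' (c 0) * L' (c 3) * L' (c 1) + L' (c 2) * L' (c 3) * L' (c 0) * L' (c 1) + L' (c 2) * L' (c 3) * L' (c 1) * L' (c 0)
      + L' (c 3) * L' (c 1) * L' (c 2) * L' (c 0) + L' (c 3) * L' (c 1) * L' (c 0) * L' (c 2) + L' (c 3) * L' (c 2) * L' (c 1) * L' (c 0)
      + L' (c 3) * L' (c 2) * L' (c 0) * L' (c 1) + L' (c 3) * L' (c 0) * L' (c 2) * L' (c 1) + L' (c 3) * L' (c 0) * L' (c 1) * L' (c 2) := by
  simp only [perm_sum_succ, perm_one_sum, Fin.sum_univ_succ, Fin.sum_univ_zero,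
    List.ofFn_succ, List.ofFn_zero, List.prod_cons, List.prod_nil, mul_one, add_zero, zero_add]
  norm_num [← add_assoc, ← mul_assoc]
  all_goals rfl

/-- The linear functional `x ↦ (η x)₀`. -/
def Tmap (Q : MvPolynomial (Fin n ⊕ Fin n) ℂ ≃ₗ[ℂ] WC n) : WC n →ₗ[ℂ] ℂ where
  toFun x := MvPolynomial.constantCoeff (Q.symm x)
  map_add' x y := by simp
  map_smul' c x := by
    simp only [map_smul, RingHom.id_apply, smul_eq_mul]
    rw [MvPolynomial.smul_eq_C_mul, map_mul, MvPolynomial.constantCoeff_C]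

lemma TQ (Q : MvPolynomial (Fin n ⊕ Fin n) ℂ ≃ₗ[ℂ] WC n) (p : MvPolynomial (Fin n ⊕ Fin n) ℂ) :
    Tmap n Q (Q p) = MvPolynomial.constantCoeff p := by
  simp [Tmap]

variable {n} in
/-- abbreviation for the letter function appearing in `hQ` -/
def Lb : Fin n ⊕ Fin n → WC n :=
  Sum.elim (fun a => wVec ℂ (CV n) (Pi.single a 1)) (fun a => wDual ℂ (CV n) (LinearMap.proj a))

lemma Lb_inl (a : Fin n) : Lb (Sum.inl a) = Wb n a := rfl
lemma Lb_inr (a : Fin n) : Lb (Sum.inr a) = Db n a := rfl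

lemma wVecL_eq_sum (f : CV n) : wVecL n f = ∑ i, f i • Wb n i := by
  have hf : f = ∑ i, f i • (Pi.single i 1 : CV n) := by
    funext j
    simp [Pi.single_apply, Finset.sum_apply]
  conv_lhs => rw [hf]
  rw [map_sum]
  simp only [map_smul]
  rfl

lemma wDualL_cForm (g : CV n) : wDualL n (cForm n g) = ∑ i, g i • Db n i := by
  rw [cForm, map_sum]
  simp only [map_smul]
  rfl

lemma sum4_delta (F : Fin n → Fin n → Fin n → Fin n → ℂ) :
    (∑ a, ∑ b, ∑ c, ∑ d, if a = c then (if b = d then F a b c d else 0) else 0)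
      = ∑ a, ∑ b, F a b a b := by
  refine Finset.sum_congr rfl fun a _ => Finset.sum_congr rfl fun b _ => ?_
  have h1 : ∀ c : Fin n, (∑ d, if a = c then (if b = d then F a b c d else 0) else 0)
      = if a = c then (∑ d, if b = d then F a b c d else 0) else 0 := fun c => by
    split <;> simp
  simp only [h1]
  rw [Finset.sum_ite_eq, if_pos (Finset.mem_univ a), Finset.sum_ite_eq,
    if_pos (Finset.mem_univ b)]

lemma sum4_delta' (F : Fin n → Fin n → Fin n → Fin n → ℂ) :
    (∑ a, ∑ b, ∑ c, ∑ d, if b = c then (if a = d then F a b c d else 0) else 0)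
      = ∑ a, ∑ b, F a b b a := by
  refine Finset.sum_congr rfl fun a _ => Finset.sum_congr rfl fun b _ => ?_
  have h1 : ∀ c : Fin n, (∑ d, if b = c then (if a = d then F a b c d else 0) else 0)
      = if b = c then (∑ d, if a = d then F a b c d else 0) else 0 := fun c => by
    split <;> simp
  simp only [h1]
  rw [Finset.sum_ite_eq, if_pos (Finset.mem_univ b), Finset.sum_ite_eq,
    if_pos (Finset.mem_univ a)]

lemma cForm_app (x v : CV n) : cForm n x v = ∑ i, x i * v i := by
  simp [cForm, LinearMap.proj]

lemma normsq (x y : CV n) (φ ψ : Module.Dual ℂ (CV n)) :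
    (wVecL n x * wDualL n φ) * (wVecL n y * wDualL n ψ)
      = wVecL n x * (wVecL n y * (wDualL n φ * wDualL n ψ))
        + (φ y) • (wVecL n x * wDualL n ψ) := by
  rw [mul_assoc, ← mul_assoc (wDualL n φ), wdw, add_mul, smul_mul_assoc, one_mul, mul_add,
    mul_smul_comm, mul_assoc]

-- AUX BATCH E (root system side)
lemma dotR_self_ne (α : RV n) (h : α ≠ 0) : dotR n α α ≠ 0 := by
  intro h0
  apply h
  have hz := (Finset.sum_eq_zero_iff_of_nonneg
    (fun i _ => mul_self_nonneg (α i))).mp h0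
  funext i
  exact mul_self_eq_zero.mp (hz i (Finset.mem_univ i))

lemma sum_cVec_mul (α β : RV n) :
    (∑ i, cVec n α i * cVec n β i) = ((dotR n α β : ℝ) : ℂ) := by
  rw [dotR]
  push_cast
  rfl

lemma cForm_cVec (α β : RV n) :
    cForm n (cVec n α) (cVec n β) = ((dotR n α β : ℝ) : ℂ) := by
  rw [cForm_app, sum_cVec_mul]

lemma dotR_comm (α β : RV n) : dotR n α β = dotR n β α :=
  Finset.sum_congr rfl fun i _ => mul_comm _ _

lemma commC_eq (α β : RV n) (hA : dotR n α α ≠ 0) (hB : dotR n β β ≠ 0) :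
    commC n α β = ((Bvee n α β : ℝ) : ℂ) •
      ((cForm n (cVec n β)).smulRight (cVec n α)
        - (cForm n (cVec n α)).smulRight (cVec n β)) := by
  have hA' : ((dotR n α α : ℝ) : ℂ) ≠ 0 := by exact_mod_cast hA
  have hB' : ((dotR n β β : ℝ) : ℂ) ≠ 0 := by exact_mod_cast hB
  have hBv : ((Bvee n α β : ℝ) : ℂ)
      = 4 * ((dotR n α β : ℝ) : ℂ) / (((dotR n α α : ℝ) : ℂ) * ((dotR n β β : ℝ) : ℂ)) := by
    rw [Bvee]; push_cast; ring
  have eA : (reflE n α).toLinearMap = reflC n α := by rw [reflE, dif_neg hA]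
  have eB : (reflE n β).toLinearMap = reflC n β := by rw [reflE, dif_neg hB]
  rw [commC, eA, eB, hBv]
  ext v
  simp only [reflC, LinearMap.sub_apply, LinearMap.comp_apply, LinearMap.smul_apply,
    LinearMap.smulRight_apply, LinearMap.id_apply, map_sub, map_smul, smul_eq_mul,
    cForm_cVec, Pi.sub_apply, Pi.smul_apply]
  rw [dotR_comm n β α]
  field_simp
  ring

lemma pi_decomp (v : CV n) : v = ∑ i, v i • (Pi.single i 1 : CV n) := by
  funext j
  simp [Pi.single_apply, Finset.sum_apply]

lemma dual_eq_sum (φ : Module.Dual ℂ (CV n)) :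
    φ = ∑ i, φ (Pi.single i 1) • LinearMap.proj i := by
  refine LinearMap.ext fun v => ?_
  conv_lhs => rw [pi_decomp n v]
  rw [map_sum]
  simp only [map_smul, smul_eq_mul, LinearMap.sum_apply, LinearMap.smul_apply,
    LinearMap.proj_apply]
  exact Finset.sum_congr rfl fun i _ => mul_comm _ _

lemma wDualL_eq_sum (φ : Module.Dual ℂ (CV n)) :
    wDualL n φ = ∑ i, φ (Pi.single i 1) • Db n i := by
  conv_lhs => rw [dual_eq_sum n φ]
  rw [map_sum]
  simp only [map_smul]
  rfl

lemma nuP_rank1 (x : CV n) (φ : Module.Dual ℂ (CV n)) :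
    nuP n (φ.smulRight x) = wVecL n x * wDualL n φ := by
  rw [nuP, wDualL_eq_sum, Finset.mul_sum]
  refine Finset.sum_congr rfl fun i _ => ?_
  rw [show (φ.smulRight x) (Pi.single i 1) = φ (Pi.single i 1) • x from rfl]
  rw [wVec_eq, map_smul, smul_mul_assoc]
  exact (mul_smul_comm _ _ _).symm

lemma nuP_smul (c : ℂ) (F : Module.End ℂ (CV n)) : nuP n (c • F) = c • nuP n F := by
  rw [nuP, nuP, Finset.smul_sum]
  refine Finset.sum_congr rfl fun i _ => ?_
  rw [show (c • F) (Pi.single i 1) = c • F (Pi.single i 1) from rfl]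
  rw [wVec_eq, map_smul, smul_mul_assoc]
  rfl

lemma nuP_sub (F G : Module.End ℂ (CV n)) : nuP n (F - G) = nuP n F - nuP n G := by
  rw [nuP, nuP, nuP, ← Finset.sum_sub_distrib]
  refine Finset.sum_congr rfl fun i _ => ?_
  rw [show (F - G) (Pi.single i 1) = F (Pi.single i 1) - G (Pi.single i 1) from rfl]
  rw [wVec_eq, map_sub, sub_mul]
  rfl

lemma rho_dot (Φp : Finset (RV n)) (kf : RV n → ℂ) (ρk : CV n)
    (hρk : ρk = (1/2 : ℂ) • ∑ α ∈ Φp, kf α • cVec n α) :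
    dotC n ρk ρk = (1/4) * ∑ α ∈ Φp, ∑ β ∈ Φp,
      kf α * kf β * ((dotR n α β : ℝ) : ℂ) := by
  rw [hρk, dotC]
  simp only [Pi.smul_apply, Finset.sum_apply, smul_eq_mul]
  have step : ∀ i : Fin n,
      (1/2 * ∑ α ∈ Φp, kf α * cVec n α i) * (1/2 * ∑ β ∈ Φp, kf β * cVec n β i)
        = (1/4) * ∑ α ∈ Φp, ∑ β ∈ Φp, (kf α * cVec n α i) * (kf β * cVec n β i) := by
    intro i
    rw [mul_mul_mul_comm, Finset.sum_mul_sum]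
    norm_num
  simp only [step]
  rw [← Finset.mul_sum]
  congr 1
  rw [Finset.sum_comm]
  refine Finset.sum_congr rfl fun α _ => ?_
  rw [Finset.sum_comm]
  refine Finset.sum_congr rfl fun β _ => ?_
  rw [← sum_cVec_mul n α β, Finset.mul_sum]
  exact Finset.sum_congr rfl fun i _ => by ring

section Thyp
variable (Q : MvPolynomial (Fin n ⊕ Fin n) ℂ ≃ₗ[ℂ] WC n)
variable (hQ : ∀ (m : ℕ) (c : Fin m → Fin n ⊕ Fin n),
      Q (∏ i, MvPolynomial.X (c i)) =
        (m.factorial : ℂ)⁻¹ • ∑ σ : Equiv.Perm (Fin m),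
          (List.ofFn fun i => Sum.elim (fun a => wVec ℂ (CV n) (Pi.single a 1))
            (fun a => wDual ℂ (CV n) (LinearMap.proj a)) (c (σ i))).prod)

include hQ

lemma T_one : Tmap n Q 1 = 1 := by
  have h := hQ 0 Fin.elim0
  simp only [Finset.univ_eq_empty, Finset.prod_empty, Nat.factorial_zero, Nat.cast_one,
    inv_one, one_smul, List.ofFn_zero, List.prod_nil] at h
  rw [Finset.sum_const, Finset.card_univ] at h
  simp only [Fintype.card_perm, Fintype.card_fin, Nat.factorial_zero, one_smul] at h
  rw [← h, TQ]
  simp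

lemma T_WD (i j : Fin n) : Tmap n Q (Wb n i * Db n j) = -(1/2) * dC n j i := by
  have h := hQ 2 ![Sum.inl i, Sum.inr j]
  rw [show (∑ σ : Equiv.Perm (Fin 2),
      (List.ofFn fun t => Sum.elim (fun a => wVec ℂ (CV n) (Pi.single a 1))
        (fun a => wDual ℂ (CV n) (LinearMap.proj a))
        ((![Sum.inl i, Sum.inr j] : Fin 2 → Fin n ⊕ Fin n) (σ t))).prod)
      = ∑ σ : Equiv.Perm (Fin 2),
      (List.ofFn fun t => Lb ((![Sum.inl i, Sum.inr j] : Fin 2 → Fin n ⊕ Fin n) (σ t))).prod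
      from rfl, perm2_word ![Sum.inl i, Sum.inr j] Lb, Fin.prod_univ_two] at h
  have hc0 : (![Sum.inl i, Sum.inr j] : Fin 2 → Fin n ⊕ Fin n) 0 = Sum.inl i := rfl
  have hc1 : (![Sum.inl i, Sum.inr j] : Fin 2 → Fin n ⊕ Fin n) 1 = Sum.inr j := rfl
  rw [hc0, hc1, Lb_inl, Lb_inr] at h
  rw [dw1] at h
  have h2 := congrArg (Tmap n Q) h
  rw [TQ] at h2
  simp only [map_mul, MvPolynomial.constantCoeff_X, mul_zero, zero_mul, map_smul, map_add,
    T_one n Q hQ, smul_eq_mul, mul_one] at h2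
  norm_num [Nat.factorial] at h2
  linear_combination h2 / 2
set_option maxHeartbeats 2000000 in
lemma T_WWDD (i j k l : Fin n) :
    Tmap n Q (Wb n i * (Wb n j * (Db n k * Db n l)))
      = (1/4) * (dC n k i * dC n l j + dC n l i * dC n k j) := by
  have h := hQ 4 ![Sum.inl i, Sum.inl j, Sum.inr k, Sum.inr l]
  rw [show (∑ σ : Equiv.Perm (Fin 4),
      (List.ofFn fun t => Sum.elim (fun a => wVec ℂ (CV n) (Pi.single a 1))
        (fun a => wDual ℂ (CV n) (LinearMap.proj a))
        ((![Sum.inl i, Sum.inl j, Sum.inr k, Sum.inr l] : Fin 4 → Fin n ⊕ Fin n) (σ t))).prod)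
      = ∑ σ : Equiv.Perm (Fin 4),
      (List.ofFn fun t => Lb ((![Sum.inl i, Sum.inl j, Sum.inr k, Sum.inr l] :
          Fin 4 → Fin n ⊕ Fin n) (σ t))).prod
      from rfl,
    perm4_word ![Sum.inl i, Sum.inl j, Sum.inr k, Sum.inr l] Lb, Fin.prod_univ_four] at h
  have hc0 : (![Sum.inl i, Sum.inl j, Sum.inr k, Sum.inr l] : Fin 4 → Fin n ⊕ Fin n) 0
      = Sum.inl i := rfl
  have hc1 : (![Sum.inl i, Sum.inl j, Sum.inr k, Sum.inr l] : Fin 4 → Fin n ⊕ Fin n) 1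
      = Sum.inl j := rfl
  have hc2 : (![Sum.inl i, Sum.inl j, Sum.inr k, Sum.inr l] : Fin 4 → Fin n ⊕ Fin n) 2
      = Sum.inr k := rfl
  have hc3 : (![Sum.inl i, Sum.inl j, Sum.inr k, Sum.inr l] : Fin 4 → Fin n ⊕ Fin n) 3
      = Sum.inr l := rfl
  simp only [hc0, hc1, hc2, hc3, Lb_inl, Lb_inr] at h
  have wbc : ∀ x : WC n, Wb n j * (Wb n i * x) = Wb n i * (Wb n j * x) := by
    intro x
    rw [← mul_assoc, ← mul_assoc]
    exact congrArg (· * x) (wvv n (Pi.single j 1) (Pi.single i 1))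
  have dbc : Db n l * Db n k = Db n k * Db n l := wdd n (LinearMap.proj l) (LinearMap.proj k)
  simp only [mul_assoc] at h
  simp only [dw2, dw1, mul_add, add_mul, smul_mul_assoc, mul_smul_comm, mul_one, one_mul,
    smul_smul, smul_add] at h
  simp only [wbc, dbc] at h
  have h2 := congrArg (Tmap n Q) h
  rw [TQ] at h2
  simp only [map_mul, MvPolynomial.constantCoeff_X, mul_zero, zero_mul, map_smul, map_add,
    T_one n Q hQ, T_WD n Q hQ, smul_eq_mul, mul_one] at h2
  norm_num [Nat.factorial] at h2
  linear_combination -h2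

lemma T2 (f g : CV n) :
    Tmap n Q (wVecL n f * wDualL n (cForm n g)) = -(1/2) * ∑ i, f i * g i := by
  rw [wVecL_eq_sum, wDualL_cForm, Finset.sum_mul_sum]
  simp only [smul_mul_assoc, mul_smul_comm, smul_smul, map_sum, map_smul, smul_eq_mul,
    T_WD n Q hQ]
  rw [Finset.mul_sum]
  refine Finset.sum_congr rfl fun i _ => ?_
  rw [Finset.sum_eq_single i]
  · simp [dC]; ring
  · intro b _ hb
    simp [dC, hb]
  · intro h; exact absurd (Finset.mem_univ i) h

lemma T4 (f f' g g' : CV n) :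
    Tmap n Q (wVecL n f * (wVecL n f' * (wDualL n (cForm n g) * wDualL n (cForm n g'))))
      = (1/4) * ((∑ i, f i * g i) * (∑ i, f' i * g' i)
          + (∑ i, f i * g' i) * (∑ i, f' i * g i)) := by
  rw [wVecL_eq_sum n f, wVecL_eq_sum n f', wDualL_cForm n g, wDualL_cForm n g']
  simp only [Finset.mul_sum, Finset.sum_mul, smul_mul_assoc, mul_smul_comm, smul_smul,
    map_sum, map_smul, smul_eq_mul, T_WWDD n Q hQ]
  simp only [dC, mul_ite, ite_mul, mul_zero, zero_mul, mul_one, one_mul, mul_add, add_mul,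
    Finset.sum_add_distrib, Finset.sum_ite_eq', Finset.mem_univ, if_true]
  rw [sum4_delta n (fun a b c d => g' a * (g b * (f' c * (f d * (1/4))))),
    sum4_delta' n (fun a b c d => g' a * (g b * (f' c * (f d * (1/4)))))]
  congr 1
  · rw [Finset.mul_sum]
    refine Finset.sum_congr rfl fun a _ => ?_
    rw [Finset.mul_sum]
    refine Finset.sum_congr rfl fun b _ => ?_
    ring
  · rw [Finset.sum_comm, Finset.mul_sum]
    refine Finset.sum_congr rfl fun a _ => ?_
    rw [Finset.mul_sum]
    refine Finset.sum_congr rfl fun b _ => ?_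
    ring

lemma T_X2 (a b : CV n) :
    Tmap n Q ((wVecL n a * wDualL n (cForm n b) - wVecL n b * wDualL n (cForm n a))^2)
      = (1/2) * ((∑ i, a i * a i) * (∑ i, b i * b i)) - (1/2) * (∑ i, a i * b i)^2 := by
  have hs : (∑ i, b i * a i) = ∑ i, a i * b i :=
    Finset.sum_congr rfl fun i _ => mul_comm _ _
  rw [sq, sub_mul, mul_sub, mul_sub,
    normsq n a a (cForm n b) (cForm n b), normsq n a b (cForm n b) (cForm n a),
    normsq n b a (cForm n a) (cForm n b), normsq n b b (cForm n a) (cForm n a)]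
  simp only [map_sub, map_add, map_smul, smul_eq_mul, T2 n Q hQ, T4 n Q hQ, cForm_app]
  rw [hs]
  ring

lemma T_pair (α β : RV n) (hA : dotR n α α ≠ 0) (hB : dotR n β β ≠ 0) (kk : ℂ) :
    Tmap n Q (if dotR n α β ≠ 0 then
        (kk * ((Bvee n α β : ℝ) : ℂ)⁻¹) • (nuP n (commC n α β))^2 else 0)
      = kk * (2 * ((dotR n α β : ℝ) : ℂ)
          - 2 * ((dotR n α β : ℝ) : ℂ)^3
              / (((dotR n α α : ℝ) : ℂ) * ((dotR n β β : ℝ) : ℂ))) := by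
  by_cases hs : dotR n α β = 0
  · simp [hs]
  · rw [if_pos hs]
    have hA' : ((dotR n α α : ℝ) : ℂ) ≠ 0 := by exact_mod_cast hA
    have hB' : ((dotR n β β : ℝ) : ℂ) ≠ 0 := by exact_mod_cast hB
    have hs' : ((dotR n α β : ℝ) : ℂ) ≠ 0 := by exact_mod_cast hs
    have hBv : ((Bvee n α β : ℝ) : ℂ)
        = 4 * ((dotR n α β : ℝ) : ℂ)
            / (((dotR n α α : ℝ) : ℂ) * ((dotR n β β : ℝ) : ℂ)) := by
      rw [Bvee]; push_cast; ring
    rw [commC_eq n α β hA hB, nuP_smul, nuP_sub, nuP_rank1, nuP_rank1, smul_pow,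
      map_smul, map_smul, T_X2 n Q hQ (cVec n α) (cVec n β),
      sum_cVec_mul, sum_cVec_mul, sum_cVec_mul, hBv]
    simp only [smul_eq_mul]
    field_simp
    ring

end Thyp
/-- The degree-0 component of `η(ν′(Ω′_W))` equals
`(1/2) B(ρ_k,ρ_k) − (1/8) Σ_{α,β>0} k_α k_β B(α,β)³/(B(α,α)B(β,β))`, where
`ρ_k = (1/2) Σ_{α>0} k_α α`.  Here `S(V ⊕ V*)` is modelled by polynomials in the
standard basis vectors of `V` and `V*`, and the symmetrization map `Q` is a linear
isomorphism with inverse `η`; the degree-0 component is the constant coefficient. -/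
theorem statement18
    (Φ Φp : Finset (RV n))
    (h0 : (0 : RV n) ∉ Φ)
    (hspan : Submodule.span ℝ (↑Φ : Set (RV n)) = ⊤)
    (hstab : ∀ α ∈ Φ, ∀ β ∈ Φ, reflR n α β ∈ Φ)
    (hred : ∀ α ∈ Φ, ∀ c : ℝ, c • α ∈ Φ → c = 1 ∨ c = -1)
    (hcrys : ∀ α ∈ Φ, ∀ β ∈ Φ, ∃ m : ℤ, 2 * dotR n α β / dotR n α α = (m : ℝ))
    (hpos_sub : Φp ⊆ Φ)
    (hpos : ∃ ℓ : (RV n) →ₗ[ℝ] ℝ, ∀ α ∈ Φ, (α ∈ Φp ↔ 0 < ℓ α))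
    (kf : RV n → ℂ)
    (hkW : ∀ α ∈ Φ, ∀ β ∈ Φ, kf (reflR n α β) = kf β)
    -- the symmetrization map `Q : S(V⊕V*) → 𝒲(V⊕V*,ω)`, with inverse `η`
    (Q : MvPolynomial (Fin n ⊕ Fin n) ℂ ≃ₗ[ℂ] WC n)
    (hQ : ∀ (m : ℕ) (c : Fin m → Fin n ⊕ Fin n),
      Q (∏ i, MvPolynomial.X (c i)) =
        (m.factorial : ℂ)⁻¹ • ∑ σ : Equiv.Perm (Fin m),
          (List.ofFn fun i => Sum.elim (fun a => wVec ℂ (CV n) (Pi.single a 1))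
            (fun a => wDual ℂ (CV n) (LinearMap.proj a)) (c (σ i))).prod)
    -- `ρ_k = (1/2) Σ_{α>0} k_α α`
    (ρk : CV n) (hρk : ρk = (1 / 2 : ℂ) • ∑ α ∈ Φp, kf α • cVec n α) :
    MvPolynomial.constantCoeff (Q.symm (nuOmegaPrime n Φp kf))
      = (1 / 2 : ℂ) * dotC n ρk ρk
        - (1 / 8 : ℂ) * ∑ α ∈ Φp, ∑ β ∈ Φp,
            kf α * kf β * ((dotR n α β : ℝ) : ℂ) ^ 3 /
              (((dotR n α α : ℝ) : ℂ) * ((dotR n β β : ℝ) : ℂ)) := by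
    -- ================= proof =================
  have hA : ∀ α ∈ Φp, dotR n α α ≠ 0 := fun α hα =>
    dotR_self_ne n α (fun h => h0 (h ▸ hpos_sub hα))
  have hTdef : MvPolynomial.constantCoeff (Q.symm (nuOmegaPrime n Φp kf))
      = Tmap n Q (nuOmegaPrime n Φp kf) := rfl
  rw [hTdef, nuOmegaPrime, map_smul]
  simp only [map_sum]
  rw [Finset.sum_congr rfl fun α hα => Finset.sum_congr rfl fun β hβ =>
    T_pair n Q hQ α β (hA α hα) (hA β hβ) (kf α * kf β)]
  rw [rho_dot n Φp kf ρk hρk, ← mul_assoc,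
    show (1/2 : ℂ) * (1/4) = 1/8 from by norm_num]
  simp only [smul_eq_mul, Finset.mul_sum, ← Finset.sum_sub_distrib]
  refine Finset.sum_congr rfl fun α hα => Finset.sum_congr rfl fun β hβ => ?_
  ring

end RootSystem

end
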